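/- Let E_u ~ Erlang(n, β₁) and E_d ~ Erlang(m, β₂) be independent. Then the density of E_u - E_d at x ≥ 0 equals (β₁ e^{-β₁ x}/(m-1)!) (β₂/(β₁+β₂))^m ∑_{j=0}^{n-1} ((n+m-j-2)!/(j!(n-j-1)!)) (β₁/(β₁+β₂))^{n-j-1} (β₁ x)^j, with the symmetric formula (swapping roles) for x < 0. -/

import Mathlib

/-- Density of the Erlang(n, β) law, vanishing on `(-∞, 0]`. -/
noncomputable def erlangPdf (n : ℕ) (β : ℝ) (x : ℝ) : ℝ :=
  if 0 < x then β * (β * x) ^ (n - 1) * Real.exp (-β * x) / (Nat.factorial (n - 1) : ℝ)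
  else 0

open MeasureTheory Real Set Filter

lemma integrableOn_pow_mul_exp (k : ℕ) {c : ℝ} (hc : 0 < c) :
    IntegrableOn (fun y : ℝ => y ^ k * Real.exp (-(c * y))) (Ioi (0:ℝ)) := by
  apply integrable_of_isBigO_exp_neg (half_pos hc)
  · exact ((continuous_pow k).mul
      (Real.continuous_exp.comp ((continuous_const.mul continuous_id).neg))).continuousOn
  · rw [Asymptotics.isBigO_iff]
    refine ⟨1, ?_⟩
    have h := tendsto_rpow_mul_exp_neg_mul_atTop_nhds_zero (k : ℝ) (c/2) (half_pos hc)
    have h1 : ∀ᶠ x : ℝ in atTop, x ^ (k:ℝ) * Real.exp (-(c/2) * x) ≤ 1 := by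
      filter_upwards [h.eventually (eventually_le_nhds (by norm_num : (0:ℝ) < 1))] with x hx
      exact hx
    filter_upwards [h1, eventually_gt_atTop (0:ℝ)] with x hx hx0
    have hrp : x ^ (k:ℝ) = x ^ k := Real.rpow_natCast x k
    rw [hrp] at hx
    have hsplit : Real.exp (-(c * x)) = Real.exp (-(c/2) * x) * Real.exp (-(c/2) * x) := by
      rw [← Real.exp_add]; ring_nf
    rw [Real.norm_eq_abs, Real.norm_eq_abs, abs_of_nonneg (by positivity),
      abs_of_nonneg (Real.exp_pos _).le, hsplit, one_mul, ← mul_assoc]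
    calc x ^ k * Real.exp (-(c/2) * x) * Real.exp (-(c/2) * x)
        ≤ 1 * Real.exp (-(c/2) * x) := by
          apply mul_le_mul_of_nonneg_right hx (Real.exp_pos _).le
      _ = Real.exp (-(c/2) * x) := one_mul _

lemma integral_pow_mul_exp (k : ℕ) {c : ℝ} (hc : 0 < c) :
    ∫ y in Ioi (0:ℝ), y ^ k * Real.exp (-(c * y))
      = (Nat.factorial k : ℝ) / c ^ (k + 1) := by
  have h := integral_rpow_mul_exp_neg_mul_Ioi (a := (k:ℝ) + 1) (r := c) (by positivity) hc
  rw [setIntegral_congr_fun measurableSet_Ioi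
      (fun t ht => by
        simp only [show ((k:ℝ) + 1 - 1) = (k:ℝ) by ring, Real.rpow_natCast]
        : EqOn (fun t : ℝ => t ^ ((k:ℝ) + 1 - 1) * Real.exp (-(c * t)))
            (fun t : ℝ => t ^ k * Real.exp (-(c * t))) (Ioi 0))] at h
  rw [h]
  rw [Real.Gamma_nat_eq_factorial,
    show ((k:ℝ) + 1) = ((k+1 : ℕ) : ℝ) by push_cast; ring, Real.rpow_natCast]
  rw [div_pow, one_pow]
  ring

lemma erlang_core (a b : ℕ) {β₁ β₂ : ℝ} (hβ₁ : 0 < β₁) (hβ₂ : 0 < β₂) {x : ℝ} (hx : 0 ≤ x) :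
    ∫ y in Ioi (0:ℝ),
      (β₁ * (β₁ * (x + y)) ^ a * Real.exp (-β₁ * (x + y)) / (Nat.factorial a : ℝ))
        * (β₂ * (β₂ * y) ^ b * Real.exp (-β₂ * y) / (Nat.factorial b : ℝ))
      = β₁ * Real.exp (-β₁ * x) / (Nat.factorial b : ℝ) * (β₂ / (β₁ + β₂)) ^ (b + 1)
        * ∑ j ∈ Finset.range (a + 1),
            (Nat.factorial (a + b - j) : ℝ)
              / ((Nat.factorial j : ℝ) * (Nat.factorial (a - j) : ℝ))
              * (β₁ / (β₁ + β₂)) ^ (a - j) * (β₁ * x) ^ j := by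
  have hp : (0:ℝ) < β₁ + β₂ := by linarith
  set C : ℕ → ℝ := fun j =>
    β₁ * β₂ * β₂ ^ b / ((Nat.factorial a : ℝ) * (Nat.factorial b : ℝ)) * Real.exp (-β₁ * x)
      * (β₁ * x) ^ j * β₁ ^ (a - j) * (Nat.choose a j : ℝ) with hC
  have step1 : ∀ y ∈ Ioi (0:ℝ),
      (β₁ * (β₁ * (x + y)) ^ a * Real.exp (-β₁ * (x + y)) / (Nat.factorial a : ℝ))
        * (β₂ * (β₂ * y) ^ b * Real.exp (-β₂ * y) / (Nat.factorial b : ℝ))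
      = ∑ j ∈ Finset.range (a + 1),
          C j * (y ^ (a - j + b) * Real.exp (-((β₁ + β₂) * y))) := by
    intro y _
    have hexp : Real.exp (-β₁ * (x + y)) * Real.exp (-β₂ * y)
        = Real.exp (-β₁ * x) * Real.exp (-((β₁ + β₂) * y)) := by
      rw [← Real.exp_add, ← Real.exp_add]; ring_nf
    have hpow : (β₁ * (x + y)) ^ a
        = ∑ j ∈ Finset.range (a + 1),
            (β₁ * x) ^ j * (β₁ ^ (a - j) * y ^ (a - j)) * (Nat.choose a j : ℝ) := by
      rw [show β₁ * (x + y) = β₁ * x + β₁ * y by ring, add_pow]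
      exact Finset.sum_congr rfl fun j _ => by ring
    rw [hpow, Finset.mul_sum, Finset.sum_mul, Finset.sum_div, Finset.sum_mul]
    refine Finset.sum_congr rfl fun j _ => ?_
    simp only [hC]
    linear_combination (β₁ * ((β₁*x)^j * (β₁^(a-j) * y^(a-j)) * (Nat.choose a j : ℝ))
      / (Nat.factorial a : ℝ) * (β₂ * (β₂*y)^b / (Nat.factorial b : ℝ))) * hexp
  rw [setIntegral_congr_fun measurableSet_Ioi step1]
  rw [MeasureTheory.integral_finset_sum _ (fun j _ =>
    ((integrableOn_pow_mul_exp (a - j + b) hp).const_mul (C j)))]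
  rw [Finset.mul_sum]
  refine Finset.sum_congr rfl fun j hj => ?_
  have hja : j ≤ a := Nat.lt_succ_iff.mp (Finset.mem_range.mp hj)
  rw [MeasureTheory.integral_const_mul, integral_pow_mul_exp _ hp]
  have hab : a + b - j = a - j + b := by omega
  rw [hab]
  simp only [hC]
  rw [Nat.cast_choose ℝ hja]
  have h1 : (Nat.factorial a : ℝ) ≠ 0 := Nat.cast_ne_zero.mpr (Nat.factorial_ne_zero a)
  have h2 : (Nat.factorial b : ℝ) ≠ 0 := Nat.cast_ne_zero.mpr (Nat.factorial_ne_zero b)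
  have h3 : (Nat.factorial j : ℝ) ≠ 0 := Nat.cast_ne_zero.mpr (Nat.factorial_ne_zero j)
  have h4 : (Nat.factorial (a - j) : ℝ) ≠ 0 := Nat.cast_ne_zero.mpr (Nat.factorial_ne_zero _)
  have h5 : β₁ + β₂ ≠ 0 := hp.ne'
  field_simp
  rw [div_pow, div_pow]
  field_simp
  ring
lemma erlang_half (n m : ℕ) (hn : 1 ≤ n) (hm : 1 ≤ m) {β₁ β₂ : ℝ}
    (hβ₁ : 0 < β₁) (hβ₂ : 0 < β₂) {x : ℝ} (hx : 0 ≤ x) :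
    (∫ y : ℝ, erlangPdf n β₁ (x + y) * erlangPdf m β₂ y)
      = β₁ * Real.exp (-β₁ * x) / (Nat.factorial (m - 1) : ℝ)
          * (β₂ / (β₁ + β₂)) ^ m
          * ∑ j ∈ Finset.range n,
              (Nat.factorial (n + m - j - 2) : ℝ)
                / ((Nat.factorial j : ℝ) * (Nat.factorial (n - j - 1) : ℝ))
                * (β₁ / (β₁ + β₂)) ^ (n - j - 1) * (β₁ * x) ^ j := by
  obtain ⟨a, rfl⟩ : ∃ a, n = a + 1 := ⟨n - 1, (Nat.succ_pred_eq_of_pos hn).symm⟩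
  obtain ⟨b, rfl⟩ : ∃ b, m = b + 1 := ⟨m - 1, (Nat.succ_pred_eq_of_pos hm).symm⟩
  have hsupp : ∀ y : ℝ, y ∉ Ioi (0:ℝ) →
      erlangPdf (a+1) β₁ (x + y) * erlangPdf (b+1) β₂ y = 0 := by
    intro y hy
    rw [mem_Ioi, not_lt] at hy
    rw [show erlangPdf (b+1) β₂ y = 0 from if_neg (not_lt.mpr hy), mul_zero]
  rw [← MeasureTheory.setIntegral_eq_integral_of_forall_compl_eq_zero hsupp]
  have hcongr : ∀ y ∈ Ioi (0:ℝ),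
      erlangPdf (a+1) β₁ (x + y) * erlangPdf (b+1) β₂ y
        = (β₁ * (β₁ * (x + y)) ^ a * Real.exp (-β₁ * (x + y)) / (Nat.factorial a : ℝ))
            * (β₂ * (β₂ * y) ^ b * Real.exp (-β₂ * y) / (Nat.factorial b : ℝ)) := by
    intro y hy
    rw [mem_Ioi] at hy
    rw [erlangPdf, erlangPdf, if_pos (by linarith), if_pos hy]
    simp
  rw [MeasureTheory.setIntegral_congr_fun measurableSet_Ioi hcongr,
    erlang_core a b hβ₁ hβ₂ hx]
  simp only [Nat.add_sub_cancel, show ∀ j : ℕ, a + 1 + (b + 1) - j - 2 = a + b - j from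
    fun j => by omega, show ∀ j : ℕ, a + 1 - j - 1 = a - j from fun j => by omega]


/-- Density of the difference `E_u - E_d` of independent `E_u ~ Erlang(n, β₁)` and
`E_d ~ Erlang(m, β₂)`, computed as the convolution `∫ f_{E_u}(x+y) f_{E_d}(y) dy`:
for `x ≥ 0` it equals
`(β₁ e^{-β₁x}/(m-1)!) (β₂/(β₁+β₂))^m ∑_{j=0}^{n-1} ((n+m-j-2)!/(j!(n-j-1)!))
(β₁/(β₁+β₂))^{n-j-1} (β₁x)^j`, with the symmetric formula for `x < 0`. -/
theorem erlang_difference_density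
    (n m : ℕ) (hn : 1 ≤ n) (hm : 1 ≤ m) (β₁ β₂ : ℝ) (hβ₁ : 0 < β₁) (hβ₂ : 0 < β₂) :
    (∀ x : ℝ, 0 ≤ x →
      (∫ y : ℝ, erlangPdf n β₁ (x + y) * erlangPdf m β₂ y)
        = β₁ * Real.exp (-β₁ * x) / (Nat.factorial (m - 1) : ℝ)
            * (β₂ / (β₁ + β₂)) ^ m
            * ∑ j ∈ Finset.range n,
                (Nat.factorial (n + m - j - 2) : ℝ)
                  / ((Nat.factorial j : ℝ) * (Nat.factorial (n - j - 1) : ℝ))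
                  * (β₁ / (β₁ + β₂)) ^ (n - j - 1) * (β₁ * x) ^ j) ∧
    (∀ x : ℝ, x < 0 →
      (∫ y : ℝ, erlangPdf n β₁ (x + y) * erlangPdf m β₂ y)
        = β₂ * Real.exp (β₂ * x) / (Nat.factorial (n - 1) : ℝ)
            * (β₁ / (β₁ + β₂)) ^ n
            * ∑ i ∈ Finset.range m,
                (Nat.factorial (n + m - i - 2) : ℝ)
                  / ((Nat.factorial i : ℝ) * (Nat.factorial (m - i - 1) : ℝ))
                  * (β₂ / (β₁ + β₂)) ^ (m - i - 1) * (-(β₂ * x)) ^ i) := by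

  constructor
  · intro x hx
    exact erlang_half n m hn hm hβ₁ hβ₂ hx
  · intro x hx
    have htrans : (∫ y : ℝ, erlangPdf n β₁ (x + y) * erlangPdf m β₂ y)
        = ∫ y : ℝ, erlangPdf m β₂ (-x + y) * erlangPdf n β₁ y := by
      rw [← MeasureTheory.integral_add_right_eq_self
        (fun y : ℝ => erlangPdf m β₂ (-x + y) * erlangPdf n β₁ y) x]
      congr 1
      funext y
      show erlangPdf n β₁ (x + y) * erlangPdf m β₂ y
          = erlangPdf m β₂ (-x + (y + x)) * erlangPdf n β₁ (y + x)
      rw [show -x + (y + x) = y by ring, show y + x = x + y by ring, mul_comm]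
    rw [htrans, erlang_half m n hm hn hβ₂ hβ₁ (show (0:ℝ) ≤ -x by linarith)]
    rw [show -β₂ * -x = β₂ * x by ring, add_comm β₂ β₁]
    congr 1
    exact Finset.sum_congr rfl fun i _ => by
      rw [show m + n - i - 2 = n + m - i - 2 by omega, show β₂ * -x = -(β₂ * x) by ring]
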